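/- The function G(x) = e^{-√2 x} - e^{-√2 x}(1+e^{2√2 x})^{-3/2} + 2√2 x e^{√2 x}(1+e^{2√2 x})^{-3/2} + k₁ e^{√2 x}(1+e^{2√2 x})^{-3/2} satisfies, for every real constant k₁, the linear ODE -G''(x) + U''(H_{0,1}(x)) G(x) = [-24 H_{0,1}(x)² + 30 H_{0,1}(x)⁴] e^{-√2 x} + 8√2 H'_{0,1}(x). -/

import Mathlib

open Real

noncomputable def U (φ : ℝ) : ℝ := φ ^ 2 * (1 - φ ^ 2) ^ 2

noncomputable def H (x : ℝ) : ℝ :=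
  Real.exp (Real.sqrt 2 * x) / Real.sqrt (1 + Real.exp (2 * Real.sqrt 2 * x))

noncomputable def G (k₁ x : ℝ) : ℝ :=
  Real.exp (-(Real.sqrt 2) * x) -
    Real.exp (-(Real.sqrt 2) * x) * (1 + Real.exp (2 * Real.sqrt 2 * x)) ^ (-(3 : ℝ) / 2) +
    2 * Real.sqrt 2 * x * Real.exp (Real.sqrt 2 * x) *
      (1 + Real.exp (2 * Real.sqrt 2 * x)) ^ (-(3 : ℝ) / 2) +
    k₁ * Real.exp (Real.sqrt 2 * x) * (1 + Real.exp (2 * Real.sqrt 2 * x)) ^ (-(3 : ℝ) / 2)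

/-! Auxiliary definitions and lemmas -/

noncomputable def G1 (k₁ x : ℝ) : ℝ :=
  Real.sqrt 2 *
    (-(Real.exp (-(Real.sqrt 2) * x)) +
      Real.exp (-(Real.sqrt 2) * x) * (1 + Real.exp (2 * Real.sqrt 2 * x)) ^ (-(3 : ℝ) / 2) +
      3 * Real.exp (-(Real.sqrt 2) * x) * Real.exp (2 * Real.sqrt 2 * x) *
        (1 + Real.exp (2 * Real.sqrt 2 * x)) ^ (-(5 : ℝ) / 2) +
      2 * Real.exp (Real.sqrt 2 * x) * (1 + Real.exp (2 * Real.sqrt 2 * x)) ^ (-(3 : ℝ) / 2) +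
      (2 * Real.sqrt 2 * x + k₁) *
        (Real.exp (Real.sqrt 2 * x) * (1 + Real.exp (2 * Real.sqrt 2 * x)) ^ (-(3 : ℝ) / 2) -
          3 * Real.exp (Real.sqrt 2 * x) * Real.exp (2 * Real.sqrt 2 * x) *
            (1 + Real.exp (2 * Real.sqrt 2 * x)) ^ (-(5 : ℝ) / 2)))

noncomputable def G2 (k₁ x : ℝ) : ℝ :=
  Real.sqrt 2 * Real.sqrt 2 *
    (Real.exp (-(Real.sqrt 2) * x) -
      Real.exp (-(Real.sqrt 2) * x) * (1 + Real.exp (2 * Real.sqrt 2 * x)) ^ (-(3 : ℝ) / 2) -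
      3 * Real.exp (-(Real.sqrt 2) * x) * Real.exp (2 * Real.sqrt 2 * x) *
        (1 + Real.exp (2 * Real.sqrt 2 * x)) ^ (-(5 : ℝ) / 2) +
      3 * Real.exp (-(Real.sqrt 2) * x) * Real.exp (2 * Real.sqrt 2 * x) *
        (1 + Real.exp (2 * Real.sqrt 2 * x)) ^ (-(5 : ℝ) / 2) +
      4 * Real.exp (Real.sqrt 2 * x) * (1 + Real.exp (2 * Real.sqrt 2 * x)) ^ (-(3 : ℝ) / 2) -
      12 * Real.exp (Real.sqrt 2 * x) * Real.exp (2 * Real.sqrt 2 * x) *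
        (1 + Real.exp (2 * Real.sqrt 2 * x)) ^ (-(5 : ℝ) / 2) -
      15 * Real.exp (-(Real.sqrt 2) * x) * Real.exp (2 * Real.sqrt 2 * x) ^ 2 *
        (1 + Real.exp (2 * Real.sqrt 2 * x)) ^ (-(7 : ℝ) / 2) +
      (2 * Real.sqrt 2 * x + k₁) *
        (Real.exp (Real.sqrt 2 * x) * (1 + Real.exp (2 * Real.sqrt 2 * x)) ^ (-(3 : ℝ) / 2) -
          12 * Real.exp (Real.sqrt 2 * x) * Real.exp (2 * Real.sqrt 2 * x) *
            (1 + Real.exp (2 * Real.sqrt 2 * x)) ^ (-(5 : ℝ) / 2) +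
          15 * Real.exp (Real.sqrt 2 * x) * Real.exp (2 * Real.sqrt 2 * x) ^ 2 *
            (1 + Real.exp (2 * Real.sqrt 2 * x)) ^ (-(7 : ℝ) / 2)))

lemma hApos (x : ℝ) : (0:ℝ) < 1 + Real.exp (2 * Real.sqrt 2 * x) := by positivity

lemma hE_deriv (x : ℝ) : HasDerivAt (fun x : ℝ => Real.exp (Real.sqrt 2 * x))
    (Real.sqrt 2 * Real.exp (Real.sqrt 2 * x)) x := by
  have h : HasDerivAt (fun x : ℝ => Real.sqrt 2 * x) (Real.sqrt 2) x := by
    simpa using (hasDerivAt_id x).const_mul (Real.sqrt 2)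
  simpa [mul_comm] using h.exp

lemma hEi_deriv (x : ℝ) : HasDerivAt (fun x : ℝ => Real.exp (-(Real.sqrt 2) * x))
    (-(Real.sqrt 2) * Real.exp (-(Real.sqrt 2) * x)) x := by
  have h : HasDerivAt (fun x : ℝ => -(Real.sqrt 2) * x) (-(Real.sqrt 2)) x := by
    simpa using (hasDerivAt_id x).const_mul (-(Real.sqrt 2))
  simpa [mul_comm] using h.exp

lemma hF_deriv (x : ℝ) : HasDerivAt (fun x : ℝ => Real.exp (2 * Real.sqrt 2 * x))
    (2 * Real.sqrt 2 * Real.exp (2 * Real.sqrt 2 * x)) x := by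
  have h : HasDerivAt (fun x : ℝ => 2 * Real.sqrt 2 * x) (2 * Real.sqrt 2) x := by
    simpa using (hasDerivAt_id x).const_mul (2 * Real.sqrt 2)
  simpa [mul_comm] using h.exp

lemma hA_deriv (x : ℝ) : HasDerivAt (fun x : ℝ => 1 + Real.exp (2 * Real.sqrt 2 * x))
    (2 * Real.sqrt 2 * Real.exp (2 * Real.sqrt 2 * x)) x :=
  (hF_deriv x).const_add 1

lemma hP_deriv (x : ℝ) :
    HasDerivAt (fun x : ℝ => (1 + Real.exp (2 * Real.sqrt 2 * x)) ^ (-(3:ℝ)/2))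
    (-3 * Real.sqrt 2 * Real.exp (2 * Real.sqrt 2 * x) *
      (1 + Real.exp (2 * Real.sqrt 2 * x)) ^ (-(5:ℝ)/2)) x := by
  have := (hA_deriv x).rpow_const (p := -(3:ℝ)/2) (Or.inl (ne_of_gt (hApos x)))
  convert this using 1
  rw [show -(3:ℝ)/2 - 1 = -(5:ℝ)/2 by norm_num]
  ring

lemma hQ_deriv (x : ℝ) :
    HasDerivAt (fun x : ℝ => (1 + Real.exp (2 * Real.sqrt 2 * x)) ^ (-(5:ℝ)/2))
    (-5 * Real.sqrt 2 * Real.exp (2 * Real.sqrt 2 * x) *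
      (1 + Real.exp (2 * Real.sqrt 2 * x)) ^ (-(7:ℝ)/2)) x := by
  have := (hA_deriv x).rpow_const (p := -(5:ℝ)/2) (Or.inl (ne_of_gt (hApos x)))
  convert this using 1
  rw [show -(5:ℝ)/2 - 1 = -(7:ℝ)/2 by norm_num]
  ring

lemma G_hasDeriv (k₁ x : ℝ) : HasDerivAt (G k₁) (G1 k₁ x) x := by
  unfold G G1
  have h1 := hEi_deriv x
  have hE := hE_deriv x
  have hP := hP_deriv x
  have h2 := h1.mul hP
  have h3 := (((hasDerivAt_id x).const_mul (2 * Real.sqrt 2)).mul hE).mul hP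
  have h4 := (hE.const_mul k₁).mul hP
  refine (((h1.sub h2).add h3).add h4).congr_deriv ?_
  simp only [id_eq, Pi.mul_apply]
  ring

lemma G1_hasDeriv (k₁ x : ℝ) : HasDerivAt (fun x => G1 k₁ x) (G2 k₁ x) x := by
  unfold G1 G2
  have hEi := hEi_deriv x
  have hE := hE_deriv x
  have hF := hF_deriv x
  have hP := hP_deriv x
  have hQ := hQ_deriv x
  have ht : HasDerivAt (fun x : ℝ => 2 * Real.sqrt 2 * x + k₁) (2 * Real.sqrt 2) x := by
    simpa using (((hasDerivAt_id x).const_mul (2 * Real.sqrt 2)).add_const k₁)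
  have b1 := hEi.neg
  have b2 := hEi.mul hP
  have b3 := ((hEi.const_mul 3).mul hF).mul hQ
  have b4 := (hE.const_mul 2).mul hP
  have inner := (hE.mul hP).sub (((hE.const_mul 3).mul hF).mul hQ)
  have b5 := ht.mul inner
  refine (((((b1.add b2).add b3).add b4).add b5).const_mul (Real.sqrt 2)).congr_deriv ?_
  simp only [Pi.mul_apply, Pi.sub_apply]
  ring

lemma U_hasDeriv (φ : ℝ) : HasDerivAt U (2*φ - 8*φ^3 + 6*φ^5) φ := by
  unfold U
  have h := (hasDerivAt_pow 2 φ).mul (((hasDerivAt_pow 2 φ).const_sub 1).pow 2)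
  refine h.congr_deriv ?_
  simp only [Pi.pow_apply]
  push_cast
  ring

lemma U1_hasDeriv (φ : ℝ) : HasDerivAt (fun φ : ℝ => 2*φ - 8*φ^3 + 6*φ^5)
    (2 - 24*φ^2 + 30*φ^4) φ := by
  have h := (((hasDerivAt_id φ).const_mul 2).sub ((hasDerivAt_pow 3 φ).const_mul 8)).add
    ((hasDerivAt_pow 5 φ).const_mul 6)
  refine h.congr_deriv ?_
  push_cast
  ring

lemma U_second_deriv (φ : ℝ) : deriv (deriv U) φ = 2 - 24*φ^2 + 30*φ^4 := by
  have h1 : deriv U = fun φ : ℝ => 2*φ - 8*φ^3 + 6*φ^5 :=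
    funext fun φ => (U_hasDeriv φ).deriv
  rw [h1]
  exact (U1_hasDeriv φ).deriv

lemma H_hasDeriv (x : ℝ) : HasDerivAt H
    (Real.sqrt 2 * Real.exp (Real.sqrt 2 * x) *
      (1 + Real.exp (2 * Real.sqrt 2 * x)) ^ (-(3:ℝ)/2)) x := by
  have hrw : H = fun x : ℝ => Real.exp (Real.sqrt 2 * x) *
      (1 + Real.exp (2 * Real.sqrt 2 * x)) ^ (-(1:ℝ)/2) := by
    funext y
    unfold H
    rw [show Real.sqrt (1 + Real.exp (2 * Real.sqrt 2 * y)) =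
        (1 + Real.exp (2 * Real.sqrt 2 * y)) ^ ((1:ℝ)/2) from Real.sqrt_eq_rpow _,
      div_eq_mul_inv, ← Real.rpow_neg (le_of_lt (hApos y))]
    norm_num
  rw [hrw]
  have hE := hE_deriv x
  have hA := (hA_deriv x).rpow_const (p := -(1:ℝ)/2) (Or.inl (ne_of_gt (hApos x)))
  have hhalf : (1 + Real.exp (2 * Real.sqrt 2 * x)) ^ (-(1:ℝ)/2) =
      (1 + Real.exp (2 * Real.sqrt 2 * x)) *
        (1 + Real.exp (2 * Real.sqrt 2 * x)) ^ (-(3:ℝ)/2) := by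
    rw [show -(1:ℝ)/2 = 1 + -(3:ℝ)/2 by norm_num, Real.rpow_add (hApos x), Real.rpow_one]
  refine (hE.mul hA).congr_deriv ?_
  rw [show -(1:ℝ)/2 - 1 = -(3:ℝ)/2 by norm_num, hhalf]
  ring

theorem G_solves_linear_ODE (k₁ : ℝ) :
    ∀ x : ℝ, -(deriv (deriv (G k₁)) x) + deriv (deriv U) (H x) * G k₁ x =
      (-24 * H x ^ 2 + 30 * H x ^ 4) * Real.exp (-(Real.sqrt 2) * x) +
        8 * Real.sqrt 2 * deriv H x := by
  intro x
  have hd1 : deriv (G k₁) = fun y => G1 k₁ y := funext fun y => (G_hasDeriv k₁ y).deriv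
  have hd2 : deriv (deriv (G k₁)) x = G2 k₁ x := by
    rw [hd1]; exact (G1_hasDeriv k₁ x).deriv
  have hs : Real.sqrt 2 * Real.sqrt 2 = 2 := Real.mul_self_sqrt (by norm_num)
  have hH2 : H x ^ 2 = Real.exp (Real.sqrt 2 * x) ^ 2 / (1 + Real.exp (2 * Real.sqrt 2 * x)) := by
    unfold H
    rw [div_pow, Real.sq_sqrt (le_of_lt (hApos x))]
  have hdH := (H_hasDeriv x).deriv
  rw [hd2, U_second_deriv, hdH, show H x ^ 4 = (H x ^ 2) ^ 2 by ring, hH2]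
  have hRHS : 8 * Real.sqrt 2 * (Real.sqrt 2 * Real.exp (Real.sqrt 2 * x) *
      (1 + Real.exp (2 * Real.sqrt 2 * x)) ^ (-(3:ℝ)/2)) =
      16 * (Real.exp (Real.sqrt 2 * x) * (1 + Real.exp (2 * Real.sqrt 2 * x)) ^ (-(3:ℝ)/2)) := by
    rw [show 8 * Real.sqrt 2 * (Real.sqrt 2 * Real.exp (Real.sqrt 2 * x) *
      (1 + Real.exp (2 * Real.sqrt 2 * x)) ^ (-(3:ℝ)/2)) = Real.sqrt 2 * Real.sqrt 2 *
      (8 * (Real.exp (Real.sqrt 2 * x) * (1 + Real.exp (2 * Real.sqrt 2 * x)) ^ (-(3:ℝ)/2)))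
      by ring, hs]
    ring
  rw [hRHS]
  unfold G G2
  have hP : (1 + Real.exp (2 * Real.sqrt 2 * x)) ^ (-(3:ℝ)/2) =
      (1 + Real.exp (2 * Real.sqrt 2 * x)) ^ 2 *
        (1 + Real.exp (2 * Real.sqrt 2 * x)) ^ (-(7:ℝ)/2) := by
    rw [show -(3:ℝ)/2 = (2:ℕ) + -(7:ℝ)/2 by norm_num, Real.rpow_add (hApos x),
      Real.rpow_natCast]
  have hQ : (1 + Real.exp (2 * Real.sqrt 2 * x)) ^ (-(5:ℝ)/2) =
      (1 + Real.exp (2 * Real.sqrt 2 * x)) *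
        (1 + Real.exp (2 * Real.sqrt 2 * x)) ^ (-(7:ℝ)/2) := by
    rw [show -(5:ℝ)/2 = 1 + -(7:ℝ)/2 by norm_num, Real.rpow_add (hApos x), Real.rpow_one]
  have hF : Real.exp (2 * Real.sqrt 2 * x) = Real.exp (Real.sqrt 2 * x) ^ 2 := by
    rw [show 2 * Real.sqrt 2 * x = Real.sqrt 2 * x + Real.sqrt 2 * x by ring, Real.exp_add]
    ring
  have hEi : Real.exp (-(Real.sqrt 2) * x) = (Real.exp (Real.sqrt 2 * x))⁻¹ := by
    rw [show -(Real.sqrt 2) * x = -(Real.sqrt 2 * x) by ring, Real.exp_neg]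
  rw [hP, hQ, hF, hEi, hs]
  have hE0 : Real.exp (Real.sqrt 2 * x) ≠ 0 := Real.exp_ne_zero _
  have hA0 : (1 : ℝ) + Real.exp (Real.sqrt 2 * x) ^ 2 ≠ 0 := by positivity
  field_simp
  ring
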